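/- For every nonnegative integer n, the set of partitions λ with o(λ) = n is finite and its cardinality equals p₂(n), the number of pairs of partitions whose sizes sum to n. -/

import Mathlib

/-- A partition: a weakly decreasing sequence of nonnegative integers with
finitely many nonzero terms. -/
structure CPartition where
  parts : ℕ → ℕ
  antitone : Antitone parts
  finite_support : Set.Finite {i : ℕ | parts i ≠ 0}

/-- The conjugate partition: `λ'_j = #{i : λ_i ≥ j}` (columns indexed from 1). -/
noncomputable def CPartition.conj (lam : CPartition) (j : ℕ) : ℕ :=
  Nat.card {i : ℕ | j ≤ lam.parts i}

/-- `o(λ) = Σ_{j odd} λ'_j`, the number of boxes of `λ` in odd-indexed columns. -/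
noncomputable def CPartition.oddCols (lam : CPartition) : ℕ :=
  ∑' j : ℕ, if Odd j then lam.conj j else 0

/-- `|λ| = Σᵢ λᵢ`, the size of a partition. -/
noncomputable def CPartition.size (lam : CPartition) : ℕ :=
  ∑' i : ℕ, lam.parts i

noncomputable def CPartition.sfin (lam : CPartition) : Finset ℕ :=
  lam.finite_support.toFinset

lemma CPartition.mem_sfin (lam : CPartition) (i : ℕ) : i ∈ lam.sfin ↔ lam.parts i ≠ 0 := by
  simp [CPartition.sfin]

/-- The multiset of nonzero parts. -/
noncomputable def CPartition.toM (lam : CPartition) : Multiset ℕ :=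
  lam.sfin.val.map lam.parts

lemma CPartition.zero_not_mem_toM (lam : CPartition) : 0 ∉ lam.toM := by
  simp only [CPartition.toM, Multiset.mem_map, not_exists]
  rintro i ⟨hi, h0⟩
  exact (lam.mem_sfin i).1 hi h0

/-- From a multiset of positive naturals, the partition with those parts. -/
noncomputable def fromM (M : Multiset ℕ) : CPartition where
  parts i := (M.sort (· ≥ ·)).getD i 0
  antitone := by
    intro i j hij
    set l := M.sort (· ≥ ·) with hl
    show l.getD j 0 ≤ l.getD i 0
    by_cases hj : j < l.length
    · have hi : i < l.length := lt_of_le_of_lt hij hj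
      rw [List.getD_eq_getElem l 0 hj, List.getD_eq_getElem l 0 hi]
      have := (Multiset.pairwise_sort M (· ≥ ·)).rel_get_of_le
        (a := ⟨i, hi⟩) (b := ⟨j, hj⟩) hij
      simpa using this
    · rw [List.getD_eq_default l 0 (le_of_not_gt hj)]
      exact Nat.zero_le _
  finite_support := by
    apply Set.Finite.subset (Set.finite_Iio (M.sort (· ≥ ·)).length)
    intro i hi
    simp only [Set.mem_setOf_eq] at hi
    by_contra hlen
    exact hi (List.getD_eq_default _ 0 (le_of_not_gt fun hc => hlen (Set.mem_Iio.2 hc)))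

lemma toM_fromM (M : Multiset ℕ) (hM : 0 ∉ M) : (fromM M).toM = M := by
  set l := M.sort (· ≥ ·) with hl
  have hsf : (fromM M).sfin = Finset.range l.length := by
    ext i
    rw [CPartition.mem_sfin, Finset.mem_range]
    constructor
    · intro h
      by_contra hlen
      exact h (List.getD_eq_default _ 0 (le_of_not_gt hlen))
    · intro h hzero
      rw [show (fromM M).parts i = l.getD i 0 from rfl, List.getD_eq_getElem l 0 h] at hzero
      apply hM
      rw [← Multiset.sort_eq M (· ≥ ·), ← hl, ← hzero]
      exact List.mem_iff_getElem.2 ⟨i, h, rfl⟩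
  rw [CPartition.toM, hsf]
  have : (Finset.range l.length).val.map (fromM M).parts
      = ((List.range l.length).map (fun i => l.getD i 0) : List ℕ) := by
    rfl
  rw [this]
  rw [← Multiset.sort_eq M (· ≥ ·), ← hl]
  congr 1
  apply List.ext_getElem
  · simp
  · intro i h1 h2
    simp only [List.getElem_map, List.getElem_range]
    exact List.getD_eq_getElem l 0 _

/-- A downward-closed finset of naturals is an initial segment. -/
lemma lowerset_mem_iff (A : Finset ℕ) (hA : ∀ i j, i ≤ j → j ∈ A → i ∈ A) (i : ℕ) :
    i ∈ A ↔ i < A.card := by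
  constructor
  · intro hi
    have hsub : Finset.range (i + 1) ⊆ A := fun k hk =>
      hA k i (Nat.lt_succ_iff.1 (Finset.mem_range.1 hk)) hi
    have := Finset.card_le_card hsub
    simpa using this
  · intro hi
    by_contra h
    have hsub : A ⊆ Finset.range i := by
      intro a ha
      rw [Finset.mem_range]
      by_contra hc
      exact h (hA i a (le_of_not_gt hc) ha)
    have := Finset.card_le_card hsub
    simp at this
    omega

lemma CPartition.le_parts_iff (lam : CPartition) {j : ℕ} (hj : 1 ≤ j) (i : ℕ) :
    j ≤ lam.parts i ↔ i < (lam.toM.countP (j ≤ ·)) := by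
  classical
  set A := lam.sfin.filter (fun i => j ≤ lam.parts i) with hA
  have hmem : ∀ k, k ∈ A ↔ j ≤ lam.parts k := by
    intro k
    simp only [hA, Finset.mem_filter, CPartition.mem_sfin]
    constructor
    · exact fun h => h.2
    · intro h; exact ⟨by omega, h⟩
  have hdc : ∀ a b, a ≤ b → b ∈ A → a ∈ A := by
    intro a b hab hb
    rw [hmem] at *
    exact le_trans hb (lam.antitone hab)
  have hcard : A.card = lam.toM.countP (j ≤ ·) := by
    rw [CPartition.toM, Multiset.countP_map]
    rfl
  rw [← hcard, ← hmem, ]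
  exact lowerset_mem_iff A hdc i

lemma CPartition.toM_injective : Function.Injective CPartition.toM := by
  intro f g h
  have key : ∀ i, f.parts i = g.parts i := by
    intro i
    by_contra hne
    rcases Nat.lt_or_ge (f.parts i) (g.parts i) with hlt | hge
    · have h1 := (g.le_parts_iff (j := f.parts i + 1) (by omega) i).1 (by omega)
      rw [← h] at h1
      have := (f.le_parts_iff (j := f.parts i + 1) (by omega) i).2 h1
      omega
    · have hlt : g.parts i < f.parts i := by omega
      have h1 := (f.le_parts_iff (j := g.parts i + 1) (by omega) i).1 (by omega)
      rw [h] at h1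
      have := (g.le_parts_iff (j := g.parts i + 1) (by omega) i).2 h1
      omega
  cases f; cases g
  simp only [CPartition.mk.injEq]
  exact funext key

lemma CPartition.size_eq (lam : CPartition) : lam.size = lam.toM.sum := by
  rw [CPartition.size, tsum_eq_sum (s := lam.sfin)
    (fun i hi => by_contra fun h => hi ((lam.mem_sfin i).2 h))]
  rfl

lemma card_filter_odd_range (n : ℕ) :
    ((Finset.range n).filter (fun j => Odd j)).card = n / 2 := by
  induction n with
  | zero => simp
  | succ n ih =>
    rw [Finset.range_add_one, Finset.filter_insert]
    by_cases h : Odd n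
    · rw [if_pos h, Finset.card_insert_of_notMem (fun hc => by simp at hc), ih]
      rw [Nat.odd_iff] at h
      omega
    · rw [if_neg h, ih]
      rw [Nat.odd_iff] at h
      omega

lemma CPartition.conj_eq_card (lam : CPartition) {j : ℕ} (hj : 1 ≤ j) :
    lam.conj j = (lam.sfin.filter (fun i => j ≤ lam.parts i)).card := by
  have hset : {i : ℕ | j ≤ lam.parts i}
      = ↑(lam.sfin.filter (fun i => j ≤ lam.parts i)) := by
    ext i
    simp only [Set.mem_setOf_eq, Finset.coe_filter, CPartition.mem_sfin, Set.mem_setOf_eq]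
    constructor
    · intro h; exact ⟨by omega, h⟩
    · exact fun h => h.2
  rw [CPartition.conj, hset, Nat.card_coe_set_eq, Set.ncard_coe_finset]

lemma CPartition.oddCols_eq (lam : CPartition) :
    lam.oddCols = (lam.toM.map (fun m => (m + 1) / 2)).sum := by
  classical
  set B := lam.sfin.sup lam.parts with hB
  have hb : ∀ i, lam.parts i ≤ B := by
    intro i
    by_cases hi : i ∈ lam.sfin
    · exact Finset.le_sup hi
    · rw [of_not_not (fun h => hi ((lam.mem_sfin i).2 h))]
      exact Nat.zero_le _
  have hout : ∀ j ∉ Finset.range (B + 1), (if Odd j then lam.conj j else 0) = 0 := by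
    intro j hj
    rw [Finset.mem_range] at hj
    have hempty : {i : ℕ | j ≤ lam.parts i} = ∅ := by
      ext i
      simp only [Set.mem_setOf_eq, Set.mem_empty_iff_false, iff_false]
      intro h
      have := hb i
      omega
    have : lam.conj j = 0 := by
      rw [CPartition.conj, hempty]
      simp
    simp [this]
  rw [CPartition.oddCols, tsum_eq_sum hout]
  have step1 : ∀ j ∈ Finset.range (B + 1),
      (if Odd j then lam.conj j else 0)
        = ∑ i ∈ lam.sfin, (if Odd j ∧ j ≤ lam.parts i then 1 else 0) := by
    intro j _
    by_cases hodd : Odd j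
    · rw [if_pos hodd, lam.conj_eq_card (hodd.pos), Finset.card_filter]
      apply Finset.sum_congr rfl
      intro i _
      by_cases h : j ≤ lam.parts i
      · rw [if_pos h, if_pos ⟨hodd, h⟩]
      · rw [if_neg h, if_neg (fun hc => h hc.2)]
    · rw [if_neg hodd]
      symm
      apply Finset.sum_eq_zero
      intro i _
      rw [if_neg (fun hc => hodd hc.1)]
  rw [Finset.sum_congr rfl step1, Finset.sum_comm]
  have step2 : ∀ i ∈ lam.sfin,
      (∑ j ∈ Finset.range (B + 1), if Odd j ∧ j ≤ lam.parts i then 1 else 0)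
        = (lam.parts i + 1) / 2 := by
    intro i _
    rw [← Finset.card_filter]
    have hfe : (Finset.range (B + 1)).filter (fun j => Odd j ∧ j ≤ lam.parts i)
        = (Finset.range (lam.parts i + 1)).filter (fun j => Odd j) := by
      ext j
      simp only [Finset.mem_filter, Finset.mem_range]
      have := hb i
      constructor
      · rintro ⟨h1, h2, h3⟩; exact ⟨by omega, h2⟩
      · rintro ⟨h1, h2⟩; exact ⟨by omega, h2, by omega⟩
    rw [hfe, card_filter_odd_range]
  rw [Finset.sum_congr rfl step2, CPartition.toM, Multiset.map_map]
  rfl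

section
open Classical in
/-- Split a multiset of positive naturals into two by parity. -/
noncomputable def msplit (M : Multiset ℕ) : Multiset ℕ × Multiset ℕ :=
  ((M.filter (fun m => Odd m)).map (fun m => (m + 1) / 2),
   (M.filter (fun m => ¬ Odd m)).map (fun m => m / 2))

/-- Merge two multisets of positive naturals into one. -/
def mmerge (p : Multiset ℕ × Multiset ℕ) : Multiset ℕ :=
  p.1.map (fun a => 2 * a - 1) + p.2.map (fun b => 2 * b)

open Classical

lemma mmerge_msplit (M : Multiset ℕ) : mmerge (msplit M) = M := by
  rw [msplit, mmerge]
  simp only [Multiset.map_map]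
  have h1 : (M.filter (fun m => Odd m)).map ((fun a => 2 * a - 1) ∘ (fun m => (m + 1) / 2))
      = (M.filter (fun m => Odd m)).map id := by
    apply Multiset.map_congr rfl
    intro m hm
    have := (Multiset.mem_filter.1 hm).2
    rw [Nat.odd_iff] at this
    simp only [Function.comp_apply, id_eq]
    omega
  have h2 : (M.filter (fun m => ¬ Odd m)).map ((fun b => 2 * b) ∘ (fun m => m / 2))
      = (M.filter (fun m => ¬ Odd m)).map id := by
    apply Multiset.map_congr rfl
    intro m hm
    have := (Multiset.mem_filter.1 hm).2
    rw [Nat.odd_iff] at this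
    simp only [Function.comp_apply, id_eq]
    omega
  rw [h1, h2, Multiset.map_id, Multiset.map_id, Multiset.filter_add_not]

lemma msplit_mmerge (A B : Multiset ℕ) (hA : 0 ∉ A) (hB : 0 ∉ B) :
    msplit (mmerge (A, B)) = (A, B) := by
  have hodd : ∀ a ∈ A, Odd (2 * a - 1) := by
    intro a ha
    have : a ≠ 0 := fun h => hA (h ▸ ha)
    rw [Nat.odd_iff]; omega
  rw [mmerge, msplit]
  have hf1 : Multiset.filter (fun m => Odd m) (A.map (fun a => 2 * a - 1) + B.map (fun b => 2 * b))
      = A.map (fun a => 2 * a - 1) := by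
    rw [Multiset.filter_add]
    have e1 : Multiset.filter (fun m => Odd m) (A.map (fun a => 2 * a - 1))
        = A.map (fun a => 2 * a - 1) := by
      rw [Multiset.filter_eq_self]
      intro m hm
      rcases Multiset.mem_map.1 hm with ⟨a, ha, rfl⟩
      exact hodd a ha
    have e2 : Multiset.filter (fun m => Odd m) (B.map (fun b => 2 * b)) = 0 := by
      rw [Multiset.filter_eq_nil]
      intro m hm
      rcases Multiset.mem_map.1 hm with ⟨b, hb, rfl⟩
      rw [Nat.odd_iff]; omega
    rw [e1, e2, add_zero]
  have hf2 : Multiset.filter (fun m => ¬ Odd m) (A.map (fun a => 2 * a - 1) + B.map (fun b => 2 * b))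
      = B.map (fun b => 2 * b) := by
    rw [Multiset.filter_add]
    have e1 : Multiset.filter (fun m => ¬ Odd m) (A.map (fun a => 2 * a - 1)) = 0 := by
      rw [Multiset.filter_eq_nil]
      intro m hm
      rcases Multiset.mem_map.1 hm with ⟨a, ha, rfl⟩
      exact fun h => h (hodd a ha)
    have e2 : Multiset.filter (fun m => ¬ Odd m) (B.map (fun b => 2 * b))
        = B.map (fun b => 2 * b) := by
      rw [Multiset.filter_eq_self]
      intro m hm
      rcases Multiset.mem_map.1 hm with ⟨b, hb, rfl⟩
      rw [Nat.odd_iff]; omega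
    rw [e1, e2, zero_add]
  rw [hf1, hf2]
  simp only [Multiset.map_map, Prod.mk.injEq]
  constructor
  · rw [show ((fun m => (m + 1) / 2) ∘ (fun a => 2 * a - 1)) = fun a => (2 * a - 1 + 1) / 2 from rfl]
    have : A.map (fun a => (2 * a - 1 + 1) / 2) = A.map id := by
      apply Multiset.map_congr rfl
      intro a ha
      have : a ≠ 0 := fun h => hA (h ▸ ha)
      simp only [id_eq]; omega
    rw [this, Multiset.map_id]
  · have : B.map ((fun m => m / 2) ∘ (fun b => 2 * b)) = B.map id := by
      apply Multiset.map_congr rfl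
      intro b _
      simp only [Function.comp_apply, id_eq]; omega
    rw [this, Multiset.map_id]

lemma msplit_pos (M : Multiset ℕ) (hM : 0 ∉ M) :
    0 ∉ (msplit M).1 ∧ 0 ∉ (msplit M).2 := by
  constructor
  · rw [msplit]
    simp only [Multiset.mem_map, Multiset.mem_filter, not_exists]
    rintro m ⟨⟨hm, hodd⟩, h0⟩
    rw [Nat.odd_iff] at hodd
    omega
  · rw [msplit]
    simp only [Multiset.mem_map, Multiset.mem_filter, not_exists]
    rintro m ⟨⟨hm, hodd⟩, h0⟩
    rw [Nat.odd_iff] at hodd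
    have : m ≠ 0 := fun h => hM (h ▸ hm)
    omega

lemma mmerge_pos (A B : Multiset ℕ) (hA : 0 ∉ A) (hB : 0 ∉ B) : 0 ∉ mmerge (A, B) := by
  rw [mmerge]
  simp only [Multiset.mem_add, Multiset.mem_map, not_or, not_exists]
  constructor
  · rintro a ⟨ha, h0⟩
    have : a ≠ 0 := fun h => hA (h ▸ ha)
    omega
  · rintro b ⟨hb, h0⟩
    have : b ≠ 0 := fun h => hB (h ▸ hb)
    omega

lemma msplit_sum (M : Multiset ℕ) :
    (M.map (fun m => (m + 1) / 2)).sum = (msplit M).1.sum + (msplit M).2.sum := by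
  rw [msplit]
  have : M.map (fun m => (m + 1) / 2)
      = (M.filter (fun m => Odd m)).map (fun m => (m + 1) / 2)
        + (M.filter (fun m => ¬ Odd m)).map (fun m => (m + 1) / 2) := by
    rw [← Multiset.map_add, Multiset.filter_add_not]
  rw [this, Multiset.sum_add]
  congr 1
  apply congrArg
  apply Multiset.map_congr rfl
  intro m hm
  have := (Multiset.mem_filter.1 hm).2
  rw [Nat.odd_iff] at this
  omega
end


lemma fromM_toM (lam : CPartition) : fromM lam.toM = lam :=
  CPartition.toM_injective (toM_fromM _ lam.zero_not_mem_toM)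

/-- The global bijection between partitions and pairs of partitions. -/
noncomputable def gEquiv : CPartition ≃ CPartition × CPartition where
  toFun lam := (fromM (msplit lam.toM).1, fromM (msplit lam.toM).2)
  invFun p := fromM (mmerge (p.1.toM, p.2.toM))
  left_inv lam := by
    have h := msplit_pos lam.toM lam.zero_not_mem_toM
    simp only [toM_fromM _ h.1, toM_fromM _ h.2]
    rw [show ((msplit lam.toM).1, (msplit lam.toM).2) = msplit lam.toM from rfl,
      mmerge_msplit, fromM_toM]
  right_inv p := by
    obtain ⟨a, b⟩ := p
    have ha := a.zero_not_mem_toM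
    have hb := b.zero_not_mem_toM
    have hm := mmerge_pos _ _ ha hb
    simp only [toM_fromM _ hm, msplit_mmerge _ _ ha hb, fromM_toM]

lemma gEquiv_key (lam : CPartition) :
    lam.oddCols = (gEquiv lam).1.size + (gEquiv lam).2.size := by
  have h := msplit_pos lam.toM lam.zero_not_mem_toM
  show lam.oddCols = (fromM (msplit lam.toM).1).size + (fromM (msplit lam.toM).2).size
  rw [CPartition.oddCols_eq, msplit_sum, CPartition.size_eq, CPartition.size_eq,
    toM_fromM _ h.1, toM_fromM _ h.2]

lemma finite_msets (k : ℕ) : {M : Multiset ℕ | 0 ∉ M ∧ M.sum = k}.Finite := by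
  rw [← Set.finite_coe_iff]
  apply Finite.of_injective (fun M =>
    (⟨M.1, fun {i} hi => Nat.pos_of_ne_zero (fun h => M.2.1 (h ▸ hi)), M.2.2⟩ : Nat.Partition k))
  intro M N h
  apply Subtype.ext
  exact congrArg Nat.Partition.parts h

lemma finite_msets_le (N : ℕ) : {M : Multiset ℕ | 0 ∉ M ∧ M.sum ≤ N}.Finite := by
  have : {M : Multiset ℕ | 0 ∉ M ∧ M.sum ≤ N}
      = ⋃ k ∈ Finset.range (N + 1), {M : Multiset ℕ | 0 ∉ M ∧ M.sum = k} := by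
    ext M
    simp only [Set.mem_setOf_eq, Set.mem_iUnion, Finset.mem_range]
    constructor
    · rintro ⟨h1, h2⟩; exact ⟨M.sum, by omega, h1, rfl⟩
    · rintro ⟨k, hk, h1, h2⟩; exact ⟨h1, by omega⟩
  rw [this]
  exact Set.Finite.biUnion (Finset.finite_toSet _) (fun k _ => finite_msets k)

theorem count_partitions_by_oddCols (n : ℕ) :
    {lam : CPartition | lam.oddCols = n}.Finite ∧
    {p : CPartition × CPartition | p.1.size + p.2.size = n}.Finite ∧
    Nat.card {lam : CPartition // lam.oddCols = n}
      = Nat.card {p : CPartition × CPartition // p.1.size + p.2.size = n} := by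
  refine ⟨?_, ?_, ?_⟩
  · -- finiteness of the set of partitions with o(λ) = n
    have hset : {lam : CPartition | lam.oddCols = n}
        = CPartition.toM ⁻¹' {M : Multiset ℕ | 0 ∉ M ∧ (M.map (fun m => (m + 1) / 2)).sum = n} := by
      ext lam
      simp only [Set.mem_setOf_eq, Set.mem_preimage, Set.mem_setOf_eq]
      rw [CPartition.oddCols_eq]
      exact ⟨fun h => ⟨lam.zero_not_mem_toM, h⟩, fun h => h.2⟩
    rw [hset]
    apply Set.Finite.preimage (CPartition.toM_injective.injOn)
    apply Set.Finite.subset (finite_msets_le (2 * n))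
    rintro M ⟨h1, h2⟩
    refine ⟨h1, ?_⟩
    calc M.sum = (M.map id).sum := by rw [Multiset.map_id]
      _ ≤ (M.map (fun m => 2 * ((m + 1) / 2))).sum :=
          Multiset.sum_map_le_sum_map _ _ (fun i _ => by simp only [id_eq]; omega)
      _ = 2 * (M.map (fun m => (m + 1) / 2)).sum := Multiset.sum_map_mul_left
      _ = 2 * n := by rw [h2]
  · -- finiteness of the set of pairs
    have hset : {p : CPartition × CPartition | p.1.size + p.2.size = n}
        = (fun p : CPartition × CPartition => (p.1.toM, p.2.toM)) ⁻¹'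
          ({M : Multiset ℕ | 0 ∉ M ∧ M.sum ≤ n} ×ˢ {M : Multiset ℕ | 0 ∉ M ∧ M.sum ≤ n}
            ∩ {q : Multiset ℕ × Multiset ℕ | q.1.sum + q.2.sum = n}) := by
      ext p
      simp only [Set.mem_setOf_eq, Set.mem_preimage, Set.mem_inter_iff, Set.mem_prod,
        Set.mem_setOf_eq]
      rw [CPartition.size_eq, CPartition.size_eq]
      constructor
      · intro h
        exact ⟨⟨⟨p.1.zero_not_mem_toM, by omega⟩, ⟨p.2.zero_not_mem_toM, by omega⟩⟩, h⟩
      · exact fun h => h.2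
    rw [hset]
    apply Set.Finite.preimage
    · intro p _ q _ h
      have h1 := congrArg Prod.fst h
      have h2 := congrArg Prod.snd h
      simp only at h1 h2
      exact Prod.ext (CPartition.toM_injective h1) (CPartition.toM_injective h2)
    · exact Set.Finite.inter_of_left ((finite_msets_le n).prod (finite_msets_le n)) _
  · -- cardinality
    apply Nat.card_congr
    apply Equiv.subtypeEquiv gEquiv
    intro lam
    rw [gEquiv_key lam]
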